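/- In the network setup, assume the proportional structure f_h(ℓ) = v_h f(ℓ) and D_h(ℓ) = δ_h D(ℓ) for ℓ ∈ [0,1], where v_h, δ_h > 0 are constants, f satisfies (f) and D satisfies (D). Then the network problem admits a traveling wave at profile level with c_h ≠ 0 for every h ∈ H which satisfies the continuity condition (φ_j(c_j t) = φ_i(c_i t) for all t ∈ ℝ and all (i,j) ∈ I×J) if and only if for every (i,j) ∈ I×J: (v_i/v_j)² = δ_i/δ_j and Σ_{i∈I} α_{i,j} (v_i/v_j) = 1. -/

import Mathlib

open Set Filter MeasureTheory
open scoped Topology Classical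

/-- Assumption (f): `f ∈ C¹([0,1];ℝ)` is nonnegative, strictly concave, `f 0 = f 1 = 0`. -/
def FluxAssumption (f : ℝ → ℝ) : Prop :=
  ContDiffOn ℝ 1 f (Icc 0 1) ∧ StrictConcaveOn ℝ (Icc 0 1) f ∧
  (∀ x ∈ Icc (0:ℝ) 1, 0 ≤ f x) ∧ f 0 = 0 ∧ f 1 = 0

/-- Assumption (D): `D ∈ C¹([0,1];ℝ)` is nonnegative and positive on `(0,1)`. -/
def DiffAssumption (D : ℝ → ℝ) : Prop :=
  ContDiffOn ℝ 1 D (Icc 0 1) ∧ (∀ x ∈ Icc (0:ℝ) 1, 0 ≤ D x) ∧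
  (∀ x ∈ Ioo (0:ℝ) 1, 0 < D x)

/-- The wave speed `c = (f(ℓ⁺) - f(ℓ⁻))/(ℓ⁺ - ℓ⁻)`. -/
noncomputable def waveSpeed (f : ℝ → ℝ) (a b : ℝ) : ℝ := (f b - f a) / (b - a)

/-- The reduced flux `g(ρ) = f(ρ) - c ρ`. -/
noncomputable def redFlux (f : ℝ → ℝ) (a b ρ : ℝ) : ℝ := f ρ - waveSpeed f a b * ρ

/-- A profile for data `f, D, ℓ⁻ = a, ℓ⁺ = b`: continuous, non-decreasing, with values in
`[a,b]`, limits `a` at `-∞` and `b` at `+∞`, `C²` on `I = {ξ | a < φ ξ < b}` with positive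
derivative there, satisfying `D(φ) φ' = g(φ) - g(a)` on `I`. -/
def IsProfile (f D : ℝ → ℝ) (a b : ℝ) (φ : ℝ → ℝ) : Prop :=
  Continuous φ ∧ Monotone φ ∧ (∀ ξ, φ ξ ∈ Icc a b) ∧
  Tendsto φ atBot (𝓝 a) ∧ Tendsto φ atTop (𝓝 b) ∧
  ContDiffOn ℝ 2 φ {ξ | a < φ ξ ∧ φ ξ < b} ∧
  ∀ ξ, a < φ ξ → φ ξ < b →
    0 < deriv φ ξ ∧ D (φ ξ) * deriv φ ξ = redFlux f a b (φ ξ) - redFlux f a b a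

/-- Speed of road `h` given end–state functions. -/
noncomputable def spd {H : Type*} (f : H → ℝ → ℝ) (lm lp : H → ℝ) (h : H) : ℝ :=
  waveSpeed (f h) (lm h) (lp h)

/-- Reduced flux of road `h` given end–state functions. -/
noncomputable def gred {H : Type*} (f : H → ℝ → ℝ) (lm lp : H → ℝ) (h : H) (ρ : ℝ) : ℝ :=
  redFlux (f h) (lm h) (lp h) ρ

/-- The network setup: flux/diffusivity assumptions on each road, and coefficients
`α i j ∈ (0,1]` with unit row sums. -/
def NetworkSetup {m n : ℕ} (f D : Fin m ⊕ Fin n → ℝ → ℝ) (α : Fin m → Fin n → ℝ) : Prop :=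
  (∀ h, FluxAssumption (f h)) ∧ (∀ h, DiffAssumption (D h)) ∧
  (∀ i j, α i j ∈ Ioc (0:ℝ) 1) ∧ (∀ i, ∑ j, α i j = 1)

/-- Admissible end states: `0 ≤ ℓ_h⁻ < ℓ_h⁺ ≤ 1` for every road. -/
def EndStates {H : Type*} (lm lp : H → ℝ) : Prop :=
  ∀ h, 0 ≤ lm h ∧ lm h < lp h ∧ lp h ≤ 1

/-- The coupling condition (Tool):
`c_j φ_j(c_j t) + g_j(ℓ_j⁻) = ∑_i α_{i,j} (c_i φ_i(c_i t) + g_i(ℓ_i⁻))` for all `t, j`. -/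
def Tool {m n : ℕ} (f : Fin m ⊕ Fin n → ℝ → ℝ) (α : Fin m → Fin n → ℝ)
    (lm lp : Fin m ⊕ Fin n → ℝ) (φ : Fin m ⊕ Fin n → ℝ → ℝ) : Prop :=
  ∀ t : ℝ, ∀ j : Fin n,
    spd f lm lp (Sum.inr j) * φ (Sum.inr j) (spd f lm lp (Sum.inr j) * t)
      + gred f lm lp (Sum.inr j) (lm (Sum.inr j))
    = ∑ i : Fin m, α i j *
        (spd f lm lp (Sum.inl i) * φ (Sum.inl i) (spd f lm lp (Sum.inl i) * t)
          + gred f lm lp (Sum.inl i) (lm (Sum.inl i)))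

/-- A traveling wave of the network problem at profile level: a family of profiles
satisfying the coupling condition (Tool). -/
def IsTravelingWave {m n : ℕ} (f D : Fin m ⊕ Fin n → ℝ → ℝ) (α : Fin m → Fin n → ℝ)
    (lm lp : Fin m ⊕ Fin n → ℝ) (φ : Fin m ⊕ Fin n → ℝ → ℝ) : Prop :=
  (∀ h, IsProfile (f h) (D h) (lm h) (lp h) (φ h)) ∧ Tool f α lm lp φ

/-- `L_{i,j}⁻`: `ℓ_i⁻` if `c_i c_j ≥ 0`, and `ℓ_i⁺` otherwise. -/
noncomputable def Lminus {m n : ℕ} (f : Fin m ⊕ Fin n → ℝ → ℝ)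
    (lm lp : Fin m ⊕ Fin n → ℝ) (i : Fin m) (j : Fin n) : ℝ :=
  if 0 ≤ spd f lm lp (Sum.inl i) * spd f lm lp (Sum.inr j) then lm (Sum.inl i)
  else lp (Sum.inl i)

/-- `L_{i,j}⁺`: `ℓ_i⁺` if `c_i c_j ≥ 0`, and `ℓ_i⁻` otherwise. -/
noncomputable def Lplus {m n : ℕ} (f : Fin m ⊕ Fin n → ℝ → ℝ)
    (lm lp : Fin m ⊕ Fin n → ℝ) (i : Fin m) (j : Fin n) : ℝ :=
  if 0 ≤ spd f lm lp (Sum.inl i) * spd f lm lp (Sum.inr j) then lp (Sum.inl i)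
  else lm (Sum.inl i)

/-- `k_j = ∑_{i ∈ I₀ᶜ} A_{i,j} L_{i,j}⁻ - ℓ_j⁻` with `A_{i,j} = α_{i,j} c_i / c_j`. -/
noncomputable def kconst {m n : ℕ} (f : Fin m ⊕ Fin n → ℝ → ℝ) (α : Fin m → Fin n → ℝ)
    (lm lp : Fin m ⊕ Fin n → ℝ) (j : Fin n) : ℝ :=
  (∑ i ∈ Finset.univ.filter (fun i : Fin m => spd f lm lp (Sum.inl i) ≠ 0),
      (α i j * (spd f lm lp (Sum.inl i) / spd f lm lp (Sum.inr j))) * Lminus f lm lp i j)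
    - lm (Sum.inr j)

section Helpers
open intervalIntegral

lemma tendsto_primitive_atTop {a b u₀ C u₁ : ℝ} {h : ℝ → ℝ}
    (hu₀ : u₀ ∈ Ioo a b) (hcont : ContinuousOn h (Ioo a b))
    (hC : 0 < C) (hu₁ : u₁ ∈ Ioo a b)
    (hlb : ∀ s ∈ Ico u₁ b, C / (b - s) ≤ h s) :
    Tendsto (fun u => ∫ s in u₀..u, h s) (𝓝[<] b) atTop := by
  have hint : ∀ u ∈ Ioo a b, ∀ w ∈ Ioo a b, IntervalIntegrable h volume u w := fun u hu w hw =>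
    (hcont.mono (Set.ordConnected_Ioo.uIcc_subset hu hw)).intervalIntegrable
  have key : ∀ u ∈ Ico u₁ b,
      (∫ s in u₀..u₁, h s) + C * Real.log ((b - u₁) / (b - u)) ≤ ∫ s in u₀..u, h s := by
    intro u hu
    have hub : u < b := hu.2
    have huI : u ∈ Ioo a b := ⟨lt_of_lt_of_le hu₁.1 hu.1, hub⟩
    have h1 : (∫ s in u₀..u₁, h s) + (∫ s in u₁..u, h s) = ∫ s in u₀..u, h s :=
      integral_add_adjacent_intervals (hint _ hu₀ _ hu₁) (hint _ hu₁ _ huI)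
    have hbu : 0 < b - u := by linarith
    have hbu₁ : 0 < b - u₁ := by linarith [hu₁.2]
    have hcont2 : ContinuousOn (fun s => C * (b - s)⁻¹) (Set.uIcc u₁ u) := by
      apply ContinuousOn.mul continuousOn_const
      apply ContinuousOn.inv₀ (by fun_prop)
      intro x hx
      rw [Set.uIcc_of_le hu.1] at hx
      have := hx.2; intro hbx; nlinarith [hu.2]
    have h2 : (∫ s in u₁..u, C * (b - s)⁻¹) ≤ ∫ s in u₁..u, h s := by
      apply integral_mono_on hu.1 hcont2.intervalIntegrable (hint _ hu₁ _ huI)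
      intro x hx
      have := hlb x ⟨hx.1, lt_of_le_of_lt hx.2 hub⟩
      rw [div_eq_mul_inv] at this; exact this
    have h3 : (∫ s in u₁..u, C * (b - s)⁻¹) = C * Real.log ((b - u₁) / (b - u)) := by
      rw [intervalIntegral.integral_const_mul]
      congr 1
      have := intervalIntegral.integral_comp_sub_left (a := u₁) (b := u) (fun x => x⁻¹) b
      rw [this, integral_inv_of_pos hbu hbu₁]
    linarith [h2, h3.symm.trans_le h2]
  -- the lower bound tends to atTop
  have hlog : Tendsto (fun u => Real.log (b - u)) (𝓝[<] b) atBot := by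
    apply Real.tendsto_log_nhdsGT_zero.comp
    apply tendsto_nhdsWithin_of_tendsto_nhds_of_eventually_within
    · have : Tendsto (fun u => b - u) (𝓝[<] b) (𝓝 (b - b)) :=
        (tendsto_const_nhds.sub tendsto_id).mono_left nhdsWithin_le_nhds
      simpa using this
    · filter_upwards [self_mem_nhdsWithin] with u hu
      simp only [mem_Iio] at hu
      simp [mem_Ioi]; linarith
  have hbu₁ : 0 < b - u₁ := by linarith [hu₁.2]
  have htend : Tendsto (fun u => (∫ s in u₀..u₁, h s) + C * Real.log ((b - u₁) / (b - u)))
      (𝓝[<] b) atTop := by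
    apply tendsto_atTop_add_const_left
    have : ∀ᶠ u in 𝓝[<] b, C * Real.log ((b - u₁) / (b - u))
        = C * Real.log (b - u₁) + (-C) * Real.log (b - u) := by
      filter_upwards [self_mem_nhdsWithin] with u hu
      simp only [mem_Iio] at hu
      rw [Real.log_div (by positivity) (by intro hh; nlinarith)]
      ring
    rw [tendsto_congr' this]
    apply tendsto_atTop_add_const_left
    exact (tendsto_const_mul_atTop_of_neg (show -C < 0 by linarith)).2 hlog
  apply tendsto_atTop_mono' _ _ htend
  filter_upwards [Ioo_mem_nhdsLT_of_mem ⟨hu₁.2, le_refl b⟩] with u hu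
  exact key u ⟨le_of_lt hu.1, hu.2⟩

lemma tendsto_primitive_atBot {a b u₀ C u₁ : ℝ} {h : ℝ → ℝ}
    (hu₀ : u₀ ∈ Ioo a b) (hcont : ContinuousOn h (Ioo a b))
    (hC : 0 < C) (hu₁ : u₁ ∈ Ioo a b)
    (hlb : ∀ s ∈ Ioc a u₁, C / (s - a) ≤ h s) :
    Tendsto (fun u => ∫ s in u₀..u, h s) (𝓝[>] a) atBot := by
  have hmaps : ∀ s ∈ Ioo a b, a + b - s ∈ Ioo a b := by
    intro s hs; exact ⟨by linarith [hs.2], by linarith [hs.1]⟩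
  have hcont' : ContinuousOn (fun s => h (a + b - s)) (Ioo a b) :=
    hcont.comp (by fun_prop) hmaps
  have hA : Tendsto (fun w => ∫ s in (a + b - u₀)..w, h (a + b - s)) (𝓝[<] b) atTop := by
    apply tendsto_primitive_atTop (hmaps _ hu₀) hcont' hC (hmaps _ hu₁)
    intro s hs
    have h1 : a + b - s ∈ Ioc a u₁ := ⟨by linarith [hs.2], by linarith [hs.1]⟩
    have := hlb _ h1
    have h2 : (a + b - s) - a = b - s := by ring
    rwa [h2] at this
  have hrefl : Tendsto (fun u => a + b - u) (𝓝[>] a) (𝓝[<] b) := by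
    apply tendsto_nhdsWithin_of_tendsto_nhds_of_eventually_within
    · have : Tendsto (fun u => a + b - u) (𝓝[>] a) (𝓝 (a + b - a)) :=
        (tendsto_const_nhds.sub tendsto_id).mono_left nhdsWithin_le_nhds
      simpa using this
    · filter_upwards [self_mem_nhdsWithin] with u hu
      simp only [mem_Ioi] at hu; simp [mem_Iio]; linarith
  have hcomp := hA.comp hrefl
  have heq : ∀ u : ℝ, (∫ s in (a + b - u₀)..(a + b - u), h (a + b - s)) = -∫ s in u₀..u, h s := by
    intro u
    rw [intervalIntegral.integral_comp_sub_left (fun x => h x) (a + b)]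
    have e1 : a + b - (a + b - u) = u := by ring
    have e2 : a + b - (a + b - u₀) = u₀ := by ring
    rw [e1, e2, intervalIntegral.integral_symm]
  rw [show (fun u => ∫ s in u₀..u, h s) = fun u => -(-∫ s in u₀..u, h s) by funext u; ring]
  apply Filter.tendsto_neg_atBot_iff.mpr
  have : ((fun w => ∫ s in (a + b - u₀)..w, h (a + b - s)) ∘ fun u => a + b - u)
      = fun u => -∫ s in u₀..u, h s := by
    funext u; simp only [Function.comp]; exact heq u
  rwa [this] at hcomp

lemma exists_eta {a b M La Lb : ℝ} {G D₀ : ℝ → ℝ} (h0 : 0 < a) (hab : a < b) (hb1 : b < 1)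
    (hM : 0 < M)
    (hGc : ContDiffOn ℝ 1 G (Ioo 0 1)) (hDc : ContDiffOn ℝ 1 D₀ (Ioo 0 1))
    (hDpos : ∀ x ∈ Ioo (0:ℝ) 1, 0 < D₀ x)
    (hGpos : ∀ u ∈ Ioo a b, 0 < G u)
    (hGa : ∀ s ∈ Ioo a b, G s ≤ La * (s - a))
    (hGb : ∀ s ∈ Ioo a b, G s ≤ Lb * (b - s)) :
    ∃ η : ℝ → ℝ, Continuous η ∧ Monotone η ∧ (∀ ξ, η ξ ∈ Ioo a b) ∧
      Tendsto η atBot (𝓝 a) ∧ Tendsto η atTop (𝓝 b) ∧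
      ContDiff ℝ 2 η ∧ ∀ ξ, HasDerivAt η (M * G (η ξ) / D₀ (η ξ)) ξ := by
  have hsub : Ioo a b ⊆ Ioo (0:ℝ) 1 := Ioo_subset_Ioo (le_of_lt h0) (le_of_lt hb1)
  set u₀ : ℝ := (a + b) / 2 with hu₀def
  have hu₀ : u₀ ∈ Ioo a b := ⟨by simp only [hu₀def]; linarith, by simp only [hu₀def]; linarith⟩
  set hinv : ℝ → ℝ := fun s => D₀ s / (M * G s) with hinvdef
  have hMGne : ∀ s ∈ Ioo a b, M * G s ≠ 0 := fun s hs => ne_of_gt (mul_pos hM (hGpos s hs))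
  have hinvc : ContinuousOn hinv (Ioo a b) :=
    (hDc.continuousOn.mono hsub).div
      (continuousOn_const.mul (hGc.continuousOn.mono hsub)) hMGne
  have hinvpos : ∀ s ∈ Ioo a b, 0 < hinv s := fun s hs =>
    div_pos (hDpos s (hsub hs)) (mul_pos hM (hGpos s hs))
  set Ψ : ℝ → ℝ := fun u => ∫ s in u₀..u, hinv s with hΨdef
  have hint : ∀ u ∈ Ioo a b, ∀ w ∈ Ioo a b, IntervalIntegrable hinv volume u w := fun u hu w hw =>
    (hinvc.mono (Set.ordConnected_Ioo.uIcc_subset hu hw)).intervalIntegrable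
  have hΨadd : ∀ u ∈ Ioo a b, ∀ w ∈ Ioo a b, Ψ w = Ψ u + ∫ s in u..w, hinv s := by
    intro u hu w hw
    have := integral_add_adjacent_intervals (hint _ hu₀ _ hu) (hint _ hu _ hw)
    simp only [hΨdef]; linarith
  have hΨmono : StrictMonoOn Ψ (Ioo a b) := by
    intro u hu w hw hlt
    have hpos : 0 < ∫ s in u..w, hinv s := by
      apply intervalIntegral_pos_of_pos_on (hint _ hu _ hw) _ hlt
      intro x hx
      exact hinvpos x ⟨lt_trans hu.1 hx.1, lt_trans hx.2 hw.2⟩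
    rw [hΨadd u hu w hw]; linarith
  have hΨd : ∀ u ∈ Ioo a b, HasDerivAt Ψ (hinv u) u := fun u hu =>
    integral_hasDerivAt_right (hint _ hu₀ _ hu)
      ((hinvc.stronglyMeasurableAtFilter isOpen_Ioo) u hu)
      (hinvc.continuousAt (isOpen_Ioo.mem_nhds hu))
  have hΨc : ContinuousOn Ψ (Ioo a b) := fun u hu =>
    ((hΨd u hu).continuousAt).continuousWithinAt
  -- divergence at the top
  have htop : Tendsto Ψ (𝓝[<] b) atTop := by
    have hcpt : Icc u₀ b ⊆ Ioo (0:ℝ) 1 := fun s hs =>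
      ⟨lt_of_lt_of_le (lt_trans h0 hu₀.1) hs.1, lt_of_le_of_lt hs.2 hb1⟩
    obtain ⟨x, hx, hxmin⟩ := isCompact_Icc.exists_isMinOn (nonempty_Icc.2 (le_of_lt hu₀.2))
      (hDc.continuousOn.mono hcpt)
    have hdpos : 0 < D₀ x := hDpos x (hcpt hx)
    set Lb' := max Lb 1 with hLb'def
    have hLb' : (0:ℝ) < Lb' := lt_of_lt_of_le one_pos (le_max_right _ _)
    refine tendsto_primitive_atTop hu₀ hinvc (show (0:ℝ) < D₀ x / (M * Lb') by positivity) hu₀ ?_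
    intro s hs
    have hsI : s ∈ Ioo a b := ⟨lt_of_lt_of_le hu₀.1 hs.1, hs.2⟩
    have hbspos : 0 < b - s := by linarith [hs.2]
    have h1 : G s ≤ Lb' * (b - s) := le_trans (hGb s hsI)
      (mul_le_mul_of_nonneg_right (le_max_left _ _) (le_of_lt hbspos))
    have h2 : D₀ x ≤ D₀ s := hxmin ⟨hs.1, le_of_lt hs.2⟩
    have h3 : D₀ x / (M * Lb') / (b - s) = D₀ x / (M * Lb' * (b - s)) := div_div _ _ _
    rw [h3]
    exact div_le_div₀ (le_of_lt (hDpos s (hsub hsI))) h2 (mul_pos hM (hGpos s hsI))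
      (by nlinarith)
  -- divergence at the bottom
  have hbot : Tendsto Ψ (𝓝[>] a) atBot := by
    have hcpt : Icc a u₀ ⊆ Ioo (0:ℝ) 1 := fun s hs =>
      ⟨lt_of_lt_of_le h0 hs.1, lt_of_le_of_lt hs.2 (lt_trans hu₀.2 hb1)⟩
    obtain ⟨x, hx, hxmin⟩ := isCompact_Icc.exists_isMinOn (nonempty_Icc.2 (le_of_lt hu₀.1))
      (hDc.continuousOn.mono hcpt)
    have hdpos : 0 < D₀ x := hDpos x (hcpt hx)
    set La' := max La 1 with hLa'def
    have hLa' : (0:ℝ) < La' := lt_of_lt_of_le one_pos (le_max_right _ _)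
    refine tendsto_primitive_atBot hu₀ hinvc (show (0:ℝ) < D₀ x / (M * La') by positivity) hu₀ ?_
    intro s hs
    have hsI : s ∈ Ioo a b := ⟨hs.1, lt_of_le_of_lt hs.2 hu₀.2⟩
    have hsapos : 0 < s - a := by linarith [hs.1]
    have h1 : G s ≤ La' * (s - a) := le_trans (hGa s hsI)
      (mul_le_mul_of_nonneg_right (le_max_left _ _) (le_of_lt hsapos))
    have h2 : D₀ x ≤ D₀ s := hxmin ⟨le_of_lt hs.1, hs.2⟩
    have h3 : D₀ x / (M * La') / (s - a) = D₀ x / (M * La' * (s - a)) := div_div _ _ _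
    rw [h3]
    exact div_le_div₀ (le_of_lt (hDpos s (hsub hsI))) h2 (mul_pos hM (hGpos s hsI))
      (by nlinarith)
  -- surjectivity of Ψ onto ℝ
  have hexist : ∀ ξ : ℝ, ∃ u, u ∈ Ioo a b ∧ Ψ u = ξ := by
    intro ξ
    have hmemT : Ioo a b ∈ 𝓝[<] b := Ioo_mem_nhdsLT_of_mem ⟨hab, le_refl b⟩
    have hmemB : Ioo a b ∈ 𝓝[>] a := Ioo_mem_nhdsGT_of_mem ⟨le_refl a, hab⟩
    obtain ⟨w, hw1, hw2⟩ := ((htop.eventually_ge_atTop ξ).and (show ∀ᶠ x in 𝓝[<] b, x ∈ Ioo a b from hmemT)).exists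
    obtain ⟨u, hu1, hu2⟩ := ((hbot.eventually_le_atBot ξ).and (show ∀ᶠ x in 𝓝[>] a, x ∈ Ioo a b from hmemB)).exists
    have huIcc : uIcc u w ⊆ Ioo a b := Set.ordConnected_Ioo.uIcc_subset hu2 hw2
    have hξmem : ξ ∈ uIcc (Ψ u) (Ψ w) := mem_uIcc.2 (Or.inl ⟨hu1, hw1⟩)
    obtain ⟨x, hx1, hx2⟩ := intermediate_value_uIcc (hΨc.mono huIcc) hξmem
    exact ⟨x, huIcc hx1, hx2⟩
  -- construct η as the inverse of Ψ
  choose η hmem hval using hexist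
  have hlt_of_lt : ∀ {ξ ξ' : ℝ}, ξ < ξ' → η ξ < η ξ' := by
    intro ξ ξ' hlt
    by_contra hle
    push_neg at hle
    have := hΨmono.monotoneOn (hmem ξ') (hmem ξ) hle
    rw [hval, hval] at this
    exact absurd this (not_le.2 hlt)
  have hηmono : StrictMono η := fun ξ ξ' h => hlt_of_lt h
  have hgt_of_gt : ∀ {c : ℝ} (hc : c ∈ Ioo a b) {ξ : ℝ}, Ψ c < ξ → c < η ξ := by
    intro c hc ξ hlt
    by_contra hle
    push_neg at hle
    have := hΨmono.monotoneOn (hmem ξ) hc hle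
    rw [hval] at this
    exact absurd this (not_le.2 hlt)
  have hlt_of_lt' : ∀ {c : ℝ} (hc : c ∈ Ioo a b) {ξ : ℝ}, ξ < Ψ c → η ξ < c := by
    intro c hc ξ hlt
    by_contra hle
    push_neg at hle
    have := hΨmono.monotoneOn hc (hmem ξ) hle
    rw [hval] at this
    exact absurd this (not_le.2 hlt)
  have hcontη : Continuous η := by
    rw [continuous_iff_continuousAt]
    intro ξ₀
    rw [ContinuousAt]
    apply tendsto_order.2
    constructor
    · intro c hc
      by_cases hca : c ≤ a
      · exact Eventually.of_forall fun ξ => lt_of_le_of_lt hca (hmem ξ).1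
      · push_neg at hca
        have hcI : c ∈ Ioo a b := ⟨hca, lt_trans hc (hmem ξ₀).2⟩
        have hΨlt : Ψ c < ξ₀ := by
          have := hΨmono hcI (hmem ξ₀) hc; rwa [hval] at this
        filter_upwards [Ioi_mem_nhds hΨlt] with ξ hξ
        exact hgt_of_gt hcI hξ
    · intro c hc
      by_cases hcb : b ≤ c
      · exact Eventually.of_forall fun ξ => lt_of_lt_of_le (hmem ξ).2 hcb
      · push_neg at hcb
        have hcI : c ∈ Ioo a b := ⟨lt_trans (hmem ξ₀).1 hc, hcb⟩
        have hΨlt : ξ₀ < Ψ c := by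
          have := hΨmono (hmem ξ₀) hcI hc; rwa [hval] at this
        filter_upwards [Iio_mem_nhds hΨlt] with ξ hξ
        exact hlt_of_lt' hcI hξ
  have hlimT : Tendsto η atTop (𝓝 b) := by
    apply tendsto_order.2
    constructor
    · intro c hc
      by_cases hca : c ≤ a
      · exact Eventually.of_forall fun ξ => lt_of_le_of_lt hca (hmem ξ).1
      · push_neg at hca
        have hcI : c ∈ Ioo a b := ⟨hca, hc⟩
        filter_upwards [eventually_gt_atTop (Ψ c)] with ξ hξ
        exact hgt_of_gt hcI hξ
    · intro c hc
      exact Eventually.of_forall fun ξ => lt_trans (hmem ξ).2 hc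
  have hlimB : Tendsto η atBot (𝓝 a) := by
    apply tendsto_order.2
    constructor
    · intro c hc
      exact Eventually.of_forall fun ξ => lt_of_le_of_lt (le_of_lt hc) (hmem ξ).1
    · intro c hc
      by_cases hcb : b ≤ c
      · exact Eventually.of_forall fun ξ => lt_of_lt_of_le (hmem ξ).2 hcb
      · push_neg at hcb
        have hcI : c ∈ Ioo a b := ⟨hc, hcb⟩
        filter_upwards [eventually_lt_atBot (Ψ c)] with ξ hξ
        exact hlt_of_lt' hcI hξ
  have hd : ∀ ξ, HasDerivAt η (M * G (η ξ) / D₀ (η ξ)) ξ := by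
    intro ξ
    have h1 := hΨd (η ξ) (hmem ξ)
    have h2 := HasDerivAt.of_local_left_inverse (hcontη.continuousAt) h1
      (ne_of_gt (hinvpos _ (hmem ξ))) (Eventually.of_forall hval)
    have h3 : (hinv (η ξ))⁻¹ = M * G (η ξ) / D₀ (η ξ) := by
      simp only [hinvdef]
      rw [inv_div]
    rwa [h3] at h2
  have hdiff : Differentiable ℝ η := fun ξ => (hd ξ).differentiableAt
  have hderiv_eq : deriv η = fun ξ => M * G (η ξ) / D₀ (η ξ) := funext fun ξ => (hd ξ).deriv
  have hFc1 : ContDiffOn ℝ 1 (fun u => M * G u / D₀ u) (Ioo a b) :=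
    (contDiffOn_const.mul (hGc.mono hsub)).div (hDc.mono hsub)
      (fun x hx => ne_of_gt (hDpos x (hsub hx)))
  have hη1 : ContDiff ℝ 1 η := by
    rw [contDiff_one_iff_deriv]
    refine ⟨hdiff, ?_⟩
    rw [hderiv_eq]
    exact hFc1.continuousOn.comp_continuous hcontη hmem
  have hη2 : ContDiff ℝ 2 η := by
    have h21 : (2 : WithTop ℕ∞) = 1 + 1 := by norm_num
    rw [h21]
    apply contDiff_succ_iff_deriv.2
    refine ⟨hdiff, by simp, ?_⟩
    rw [hderiv_eq]
    have := hFc1.comp (hη1.contDiffOn (s := univ)) (fun x _ => hmem x)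
    rw [contDiffOn_univ] at this
    exact this
  exact ⟨η, hcontη, hηmono.monotone, hmem, hlimB, hlimT, hη2, hd⟩

lemma spd_eq {H : Type*} (f : H → ℝ → ℝ) (v : H → ℝ) (f₀ : ℝ → ℝ)
    (hf : ∀ h ℓ, f h ℓ = v h * f₀ ℓ) (lm lp : H → ℝ) (h : H) :
    spd f lm lp h = v h * waveSpeed f₀ (lm h) (lp h) := by
  unfold spd waveSpeed
  rw [hf, hf, ← mul_sub, mul_div_assoc]

lemma gred_eq {H : Type*} (f : H → ℝ → ℝ) (lm lp : H → ℝ) (h : H) (ρ : ℝ) :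
    gred f lm lp h ρ = f h ρ - spd f lm lp h * ρ := rfl

theorem fwd {m n : ℕ}
    (f₀ D₀ : ℝ → ℝ) (hf₀ : FluxAssumption f₀) (hD₀ : DiffAssumption D₀)
    (v δ : Fin m ⊕ Fin n → ℝ) (hv : ∀ h, 0 < v h) (hδ : ∀ h, 0 < δ h)
    (f D : Fin m ⊕ Fin n → ℝ → ℝ)
    (hf : ∀ h ℓ, f h ℓ = v h * f₀ ℓ) (hD : ∀ h ℓ, D h ℓ = δ h * D₀ ℓ)
    (α : Fin m → Fin n → ℝ)
    (lm lp : Fin m ⊕ Fin n → ℝ) (φ : Fin m ⊕ Fin n → ℝ → ℝ)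
    (hE : EndStates lm lp) (hprof : ∀ h, IsProfile (f h) (D h) (lm h) (lp h) (φ h))
    (htool : Tool f α lm lp φ) (hc : ∀ h, spd f lm lp h ≠ 0)
    (hcont : ∀ (t : ℝ) (i : Fin m) (j : Fin n),
          φ (Sum.inr j) (spd f lm lp (Sum.inr j) * t)
            = φ (Sum.inl i) (spd f lm lp (Sum.inl i) * t))
    (i : Fin m) (j : Fin n) :
    (v (Sum.inl i) / v (Sum.inr j)) ^ 2 = δ (Sum.inl i) / δ (Sum.inr j) ∧
        (∑ i' : Fin m, α i' j * (v (Sum.inl i') / v (Sum.inr j))) = 1 := by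
  have hvne : ∀ h, v h ≠ 0 := fun h => ne_of_gt (hv h)
  have hspd : ∀ h, spd f lm lp h = v h * waveSpeed f₀ (lm h) (lp h) :=
    fun h => spd_eq f v f₀ hf lm lp h
  -- limits of the composed functions
  have hlim : ∀ h, (0 < spd f lm lp h ∧
      Tendsto (fun t => φ h (spd f lm lp h * t)) atTop (𝓝 (lp h)) ∧
      Tendsto (fun t => φ h (spd f lm lp h * t)) atBot (𝓝 (lm h)))
    ∨ (spd f lm lp h < 0 ∧
      Tendsto (fun t => φ h (spd f lm lp h * t)) atTop (𝓝 (lm h)) ∧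
      Tendsto (fun t => φ h (spd f lm lp h * t)) atBot (𝓝 (lp h))) := by
    intro h
    rcases (hc h).lt_or_gt with hneg | hpos
    · right
      refine ⟨hneg, ?_, ?_⟩
      · exact (hprof h).2.2.2.1.comp ((tendsto_const_mul_atBot_of_neg hneg).2 tendsto_id)
      · exact (hprof h).2.2.2.2.1.comp ((tendsto_const_mul_atTop_of_neg hneg).2 tendsto_id)
    · left
      refine ⟨hpos, ?_, ?_⟩
      · exact (hprof h).2.2.2.2.1.comp ((tendsto_const_mul_atTop_of_pos hpos).2 tendsto_id)
      · exact (hprof h).2.2.2.1.comp ((tendsto_const_mul_atBot_of_pos hpos).2 tendsto_id)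
  -- all end states agree
  have keyA : ∀ i' : Fin m, lm (Sum.inl i') = lm (Sum.inr j) ∧ lp (Sum.inl i') = lp (Sum.inr j) := by
    intro i'
    have heq : (fun t => φ (Sum.inl i') (spd f lm lp (Sum.inl i') * t))
        = (fun t => φ (Sum.inr j) (spd f lm lp (Sum.inr j) * t)) :=
      funext fun t => (hcont t i' j).symm
    have hlpi := hE (Sum.inl i'); have hlpj := hE (Sum.inr j)
    rcases hlim (Sum.inl i') with ⟨hi, hiT, hiB⟩ | ⟨hi, hiT, hiB⟩ <;>
      rcases hlim (Sum.inr j) with ⟨hj, hjT, hjB⟩ | ⟨hj, hjT, hjB⟩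
    · exact ⟨tendsto_nhds_unique (heq ▸ hiB) hjB, tendsto_nhds_unique (heq ▸ hiT) hjT⟩
    · have h1 := tendsto_nhds_unique (heq ▸ hiT) hjT
      have h2 := tendsto_nhds_unique (heq ▸ hiB) hjB
      exfalso; linarith [hlpi.2.1, hlpj.2.1]
    · have h1 := tendsto_nhds_unique (heq ▸ hiT) hjT
      have h2 := tendsto_nhds_unique (heq ▸ hiB) hjB
      exfalso; linarith [hlpi.2.1, hlpj.2.1]
    · exact ⟨tendsto_nhds_unique (heq ▸ hiT) hjT, tendsto_nhds_unique (heq ▸ hiB) hjB⟩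
  -- common end states and speed
  have hAB := hE (Sum.inr j)
  set A := lm (Sum.inr j) with hAdef
  set B := lp (Sum.inr j) with hBdef
  set c₀ := waveSpeed f₀ A B with hc₀def
  have hcj : spd f lm lp (Sum.inr j) = v (Sum.inr j) * c₀ := hspd _
  have hci : ∀ i' : Fin m, spd f lm lp (Sum.inl i') = v (Sum.inl i') * c₀ := by
    intro i'
    rw [hspd]
    congr 1
    rw [(keyA i').1, (keyA i').2]
  have hc₀ : c₀ ≠ 0 := by
    intro h0
    exact hc (Sum.inr j) (by rw [hcj, h0, mul_zero])
  -- the common wave ψ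
  set ψ := fun t => φ (Sum.inr j) (spd f lm lp (Sum.inr j) * t) with hψdef
  have hψne : ∃ t₁ t₂, ψ t₁ ≠ ψ t₂ := by
    by_contra hcon
    push_neg at hcon
    have hconst : ψ = fun _ => ψ 0 := funext fun t => hcon t 0
    have hψ0 : Tendsto ψ atTop (𝓝 (ψ 0)) := by rw [hconst]; exact tendsto_const_nhds
    have hψ0' : Tendsto ψ atBot (𝓝 (ψ 0)) := by rw [hconst]; exact tendsto_const_nhds
    rcases hlim (Sum.inr j) with ⟨_, hT, hB⟩ | ⟨_, hT, hB⟩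
    · have h1 := tendsto_nhds_unique hψ0 hT
      have h2 := tendsto_nhds_unique hψ0' hB
      linarith [hAB.2.1]
    · have h1 := tendsto_nhds_unique hψ0 hT
      have h2 := tendsto_nhds_unique hψ0' hB
      linarith [hAB.2.1]
  -- the sum condition
  have hrw : ∀ (t : ℝ) (i' : Fin m),
      φ (Sum.inl i') (spd f lm lp (Sum.inl i') * t) = ψ t := fun t i' => (hcont t i' j).symm
  have hsum : ∑ i' : Fin m, α i' j * spd f lm lp (Sum.inl i') = spd f lm lp (Sum.inr j) := by
    obtain ⟨t₁, t₂, hne⟩ := hψne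
    have e1 := htool t₁ j
    have e2 := htool t₂ j
    simp only [hrw] at e1 e2
    have expand : ∀ t : ℝ, ∑ i' : Fin m, α i' j *
          (spd f lm lp (Sum.inl i') * ψ t + gred f lm lp (Sum.inl i') (lm (Sum.inl i')))
        = (∑ i' : Fin m, α i' j * spd f lm lp (Sum.inl i')) * ψ t
          + ∑ i' : Fin m, α i' j * gred f lm lp (Sum.inl i') (lm (Sum.inl i')) := by
      intro t
      rw [Finset.sum_mul, ← Finset.sum_add_distrib]
      exact Finset.sum_congr rfl fun i' _ => by ring
    rw [expand] at e1 e2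
    have hfac : (spd f lm lp (Sum.inr j) - ∑ i' : Fin m, α i' j * spd f lm lp (Sum.inl i'))
        * (ψ t₁ - ψ t₂) = 0 := by linear_combination e1 - e2
    rcases mul_eq_zero.1 hfac with h0 | h0
    · linarith
    · exact absurd (sub_eq_zero.1 h0) hne
  have hsumv : ∑ i' : Fin m, α i' j * v (Sum.inl i') = v (Sum.inr j) := by
    have h1 : (∑ i' : Fin m, α i' j * v (Sum.inl i')) * c₀ = v (Sum.inr j) * c₀ := by
      rw [Finset.sum_mul, ← hcj, ← hsum]
      apply Finset.sum_congr rfl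
      intro i' _
      rw [hci i']
      ring
    exact mul_right_cancel₀ hc₀ h1
  refine ⟨?_, ?_⟩
  swap
  · -- the sum condition in divided form
    have : ∑ i' : Fin m, α i' j * (v (Sum.inl i') / v (Sum.inr j))
        = (∑ i' : Fin m, α i' j * v (Sum.inl i')) / v (Sum.inr j) := by
      rw [Finset.sum_div]
      exact Finset.sum_congr rfl fun i' _ => by ring
    rw [this, hsumv, div_self (hvne _)]
  · -- the square condition
    set u := (A + B) / 2 with hudef
    have hu1 : A < u := by simp only [hudef]; linarith [hAB.2.1]
    have hu2 : u < B := by simp only [hudef]; linarith [hAB.2.1]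
    -- find a point where φ_j takes the value u
    have hTj := (hprof (Sum.inr j)).2.2.2.2.1
    have hBj := (hprof (Sum.inr j)).2.2.2.1
    obtain ⟨tp, htp⟩ := (hTj.eventually (eventually_gt_nhds hu2)).exists
    obtain ⟨tm, htm⟩ := (hBj.eventually (eventually_lt_nhds hu1)).exists
    obtain ⟨ξs, _, hξs⟩ := intermediate_value_uIcc
      ((hprof (Sum.inr j)).1.continuousOn (s := uIcc tm tp))
      (mem_uIcc.2 (Or.inl ⟨le_of_lt htm, le_of_lt htp⟩))
    set ts := ξs / spd f lm lp (Sum.inr j) with htsdef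
    have hcts : spd f lm lp (Sum.inr j) * ts = ξs := by
      rw [htsdef, mul_div_cancel₀ _ (hc (Sum.inr j))]
    have hvalj : φ (Sum.inr j) (spd f lm lp (Sum.inr j) * ts) = u := by rw [hcts, hξs]
    have hvali : φ (Sum.inl i) (spd f lm lp (Sum.inl i) * ts) = u := by
      rw [← hcont ts i j, hvalj]
    have hD₀u : 0 < D₀ u := by
      apply hD₀.2.2
      constructor
      · exact lt_of_le_of_lt hAB.1 hu1
      · exact lt_of_lt_of_le hu2 hAB.2.2
    set Gu := f₀ u - f₀ A - c₀ * (u - A) with hGudef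
    -- derivative and ODE information for a road h
    have hstep : ∀ h : Fin m ⊕ Fin n, lm h = A → lp h = B →
        φ h (spd f lm lp h * ts) = u →
        HasDerivAt (φ h) (deriv (φ h) (spd f lm lp h * ts)) (spd f lm lp h * ts) ∧
        0 < deriv (φ h) (spd f lm lp h * ts) ∧
        δ h * (D₀ u * deriv (φ h) (spd f lm lp h * ts)) = v h * Gu := by
      intro h hlmh hlph hval
      set ξh := spd f lm lp h * ts with hξhdef
      have hmem : lm h < φ h ξh ∧ φ h ξh < lp h := by
        rw [hval, hlmh, hlph]; exact ⟨hu1, hu2⟩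
      have hODE := (hprof h).2.2.2.2.2.2 ξh hmem.1 hmem.2
      have hSopen : IsOpen {ξ | lm h < φ h ξ ∧ φ h ξ < lp h} := by
        have : {ξ | lm h < φ h ξ ∧ φ h ξ < lp h} = φ h ⁻¹' (Ioo (lm h) (lp h)) := rfl
        rw [this]
        exact isOpen_Ioo.preimage (hprof h).1
      have hdiffAt : DifferentiableAt ℝ (φ h) ξh := by
        apply (((hprof h).2.2.2.2.2.1).differentiableOn (by norm_num)).differentiableAt
        exact hSopen.mem_nhds hmem
      refine ⟨hdiffAt.hasDerivAt, hODE.1, ?_⟩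
      have heq := hODE.2
      rw [hval] at heq
      have hws : waveSpeed (f h) (lm h) (lp h) = v h * c₀ := by
        rw [show waveSpeed (f h) (lm h) (lp h) = spd f lm lp h from rfl, hspd, hlmh, hlph]
      have hred : ∀ ρ : ℝ, redFlux (f h) (lm h) (lp h) ρ = v h * f₀ ρ - (v h * c₀) * ρ := by
        intro ρ
        unfold redFlux
        rw [hf, hws]
      rw [hred, hred, hD, hlmh] at heq
      rw [hGudef]
      linear_combination heq
    obtain ⟨hdi, hdipos, hei⟩ := hstep (Sum.inl i) (keyA i).1 (keyA i).2 hvali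
    obtain ⟨hdj, hdjpos, hej⟩ := hstep (Sum.inr j) rfl rfl hvalj
    set di := deriv (φ (Sum.inl i)) (spd f lm lp (Sum.inl i) * ts) with hdidef
    set dj := deriv (φ (Sum.inr j)) (spd f lm lp (Sum.inr j) * ts) with hdjdef
    -- chain rule: the composed functions are equal, so derivatives coincide
    have hinner : ∀ h : Fin m ⊕ Fin n,
        HasDerivAt (fun t : ℝ => spd f lm lp h * t) (spd f lm lp h) ts := by
      intro h
      simpa using (hasDerivAt_id ts).const_mul (spd f lm lp h)
    have hFj : HasDerivAt (fun t => φ (Sum.inr j) (spd f lm lp (Sum.inr j) * t))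
        (dj * spd f lm lp (Sum.inr j)) ts := HasDerivAt.comp ts hdj (hinner _)
    have hFi : HasDerivAt (fun t => φ (Sum.inl i) (spd f lm lp (Sum.inl i) * t))
        (di * spd f lm lp (Sum.inl i)) ts := HasDerivAt.comp ts hdi (hinner _)
    have hfuneq : (fun t => φ (Sum.inr j) (spd f lm lp (Sum.inr j) * t))
        = (fun t => φ (Sum.inl i) (spd f lm lp (Sum.inl i) * t)) :=
      funext fun t => hcont t i j
    have hder_eq : dj * spd f lm lp (Sum.inr j) = di * spd f lm lp (Sum.inl i) := by
      have hFj' : HasDerivAt (fun t => φ (Sum.inl i) (spd f lm lp (Sum.inl i) * t))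
          (dj * spd f lm lp (Sum.inr j)) ts := hfuneq ▸ hFj
      exact hFj'.unique hFi
    -- positivity of Gu
    have hGupos : 0 < Gu := by
      have h1 : 0 < δ (Sum.inl i) * (D₀ u * di) :=
        mul_pos (hδ _) (mul_pos hD₀u hdipos)
      rw [hei] at h1
      nlinarith [hv (Sum.inl i)]
    -- the key algebraic identity
    have hdv : di * v (Sum.inl i) = dj * v (Sum.inr j) := by
      have h1 : di * v (Sum.inl i) * c₀ = dj * v (Sum.inr j) * c₀ := by
        rw [hci i, hcj] at hder_eq
        linear_combination -hder_eq
      exact mul_right_cancel₀ hc₀ h1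
    have hkey : v (Sum.inl i) ^ 2 * δ (Sum.inr j) * (Gu * D₀ u)
        = v (Sum.inr j) ^ 2 * δ (Sum.inl i) * (Gu * D₀ u) := by
      linear_combination -((v (Sum.inl i) * δ (Sum.inr j) * D₀ u) * hei)
        + (v (Sum.inr j) * δ (Sum.inl i) * D₀ u) * hej
        + (δ (Sum.inl i) * δ (Sum.inr j) * D₀ u ^ 2) * hdv
    have hcancel : v (Sum.inl i) ^ 2 * δ (Sum.inr j) = v (Sum.inr j) ^ 2 * δ (Sum.inl i) :=
      mul_right_cancel₀ (ne_of_gt (mul_pos hGupos hD₀u)) hkey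
    rw [div_pow, div_eq_div_iff (pow_ne_zero 2 (hvne (Sum.inr j))) (ne_of_gt (hδ (Sum.inr j)))]
    linear_combination hcancel


theorem bwd {m n : ℕ} (hm : 0 < m) (hn : 0 < n)
    (f₀ D₀ : ℝ → ℝ) (hf₀ : FluxAssumption f₀) (hD₀ : DiffAssumption D₀)
    (v δ : Fin m ⊕ Fin n → ℝ) (hv : ∀ h, 0 < v h) (hδ : ∀ h, 0 < δ h)
    (f D : Fin m ⊕ Fin n → ℝ → ℝ)
    (hf : ∀ h ℓ, f h ℓ = v h * f₀ ℓ) (hD : ∀ h ℓ, D h ℓ = δ h * D₀ ℓ)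
    (α : Fin m → Fin n → ℝ)
    (hα : ∀ i j, α i j ∈ Ioc (0:ℝ) 1) (hα1 : ∀ i, ∑ j, α i j = 1)
    (hcond : ∀ (i : Fin m) (j : Fin n),
        (v (Sum.inl i) / v (Sum.inr j)) ^ 2 = δ (Sum.inl i) / δ (Sum.inr j) ∧
        (∑ i' : Fin m, α i' j * (v (Sum.inl i') / v (Sum.inr j))) = 1) :
    (∃ (lm lp : Fin m ⊕ Fin n → ℝ) (φ : Fin m ⊕ Fin n → ℝ → ℝ),
        EndStates lm lp ∧ IsTravelingWave f D α lm lp φ ∧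
        (∀ h, spd f lm lp h ≠ 0) ∧
        ∀ (t : ℝ) (i : Fin m) (j : Fin n),
          φ (Sum.inr j) (spd f lm lp (Sum.inr j) * t)
            = φ (Sum.inl i) (spd f lm lp (Sum.inl i) * t)) := by
  have hvne : ∀ h, v h ≠ 0 := fun h => ne_of_gt (hv h)
  have hδne : ∀ h, δ h ≠ 0 := fun h => ne_of_gt (hδ h)
  set i₀ : Fin m := ⟨0, hm⟩
  set j₀ : Fin n := ⟨0, hn⟩
  -- the common constant K = v² / δ
  have hstepK : ∀ (i : Fin m) (j : Fin n),
      v (Sum.inl i) ^ 2 / δ (Sum.inl i) = v (Sum.inr j) ^ 2 / δ (Sum.inr j) := by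
    intro i j
    have h1 := (hcond i j).1
    rw [div_pow, div_eq_div_iff (pow_ne_zero 2 (hvne (Sum.inr j))) (hδne (Sum.inr j))] at h1
    rw [div_eq_div_iff (hδne (Sum.inl i)) (hδne (Sum.inr j))]
    linear_combination h1
  set K := v (Sum.inl i₀) ^ 2 / δ (Sum.inl i₀) with hKdef
  have hK : ∀ h, v h ^ 2 / δ h = K := by
    intro h
    cases h with
    | inl i => rw [hstepK i j₀, ← hstepK i₀ j₀]
    | inr j => rw [← hstepK i₀ j]
  have hKpos : 0 < K := div_pos (pow_pos (hv _) 2) (hδ _)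
  have hveq : ∀ h, v h ^ 2 = K * δ h := by
    intro h
    rw [← hK h, div_mul_cancel₀ _ (hδne h)]
  -- the sum condition in multiplied form
  have hsumv : ∀ j : Fin n, ∑ i' : Fin m, α i' j * v (Sum.inl i') = v (Sum.inr j) := by
    intro j
    have h1 := (hcond i₀ j).2
    have h2 : (∑ i' : Fin m, α i' j * (v (Sum.inl i') / v (Sum.inr j))) * v (Sum.inr j)
        = v (Sum.inr j) := by rw [h1, one_mul]
    rw [Finset.sum_mul] at h2
    rw [← h2]
    apply Finset.sum_congr rfl
    intro i' _
    rw [mul_assoc, div_mul_cancel₀ _ (hvne (Sum.inr j))]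
  -- choice of end states
  set a : ℝ := 1/4 with hadef
  set b : ℝ := if f₀ (1/2) = f₀ (1/4) then (3/4 : ℝ) else 1/2 with hbdef
  have hconc := hf₀.2.1
  have hmemIcc : ∀ x : ℝ, 0 ≤ x → x ≤ 1 → x ∈ Icc (0:ℝ) 1 := fun x h1 h2 => ⟨h1, h2⟩
  have hfab : f₀ a ≠ f₀ b := by
    rw [hadef, hbdef]
    by_cases hcase : f₀ (1/2) = f₀ (1/4)
    · rw [if_pos hcase]
      intro heq
      have := hconc.2 (hmemIcc (1/4) (by norm_num) (by norm_num))
        (hmemIcc (3/4) (by norm_num) (by norm_num)) (by norm_num)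
        (by norm_num : (0:ℝ) < 1/2) (by norm_num : (0:ℝ) < 1/2) (by norm_num)
      simp only [smul_eq_mul] at this
      rw [show (1/2 : ℝ) * (1/4) + (1/2) * (3/4) = 1/2 by norm_num] at this
      rw [← heq] at this
      linarith [this, hcase]
    · rw [if_neg hcase]
      exact fun h => hcase h.symm
  have hab : a < b := by
    rw [hadef, hbdef]; split <;> norm_num
  have ha0 : (0:ℝ) < a := by rw [hadef]; norm_num
  have hb1 : b < 1 := by rw [hbdef]; split <;> norm_num
  have habne : b - a ≠ 0 := ne_of_gt (by linarith)
  set c₀ : ℝ := waveSpeed f₀ a b with hc₀def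
  have hc₀ne : c₀ ≠ 0 := by
    rw [hc₀def]
    unfold waveSpeed
    exact div_ne_zero (sub_ne_zero.2 (Ne.symm hfab)) habne
  have hchord : f₀ b - f₀ a = c₀ * (b - a) := by
    rw [hc₀def]; unfold waveSpeed; field_simp
  -- the reduced flux shape function
  set G : ℝ → ℝ := fun u => f₀ u - f₀ a - c₀ * (u - a) with hGdef
  have hIccab : Icc a b ⊆ Icc (0:ℝ) 1 := Icc_subset_Icc (by linarith) (by linarith)
  have hGpos : ∀ u ∈ Ioo a b, 0 < G u := by
    intro u hu
    set p := (b - u) / (b - a) with hpdef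
    set q := (u - a) / (b - a) with hqdef
    have hp : 0 < p := div_pos (by linarith [hu.2]) (by linarith)
    have hq : 0 < q := div_pos (by linarith [hu.1]) (by linarith)
    have hpq : p + q = 1 := by rw [hpdef, hqdef]; field_simp; ring
    have hcomb := hconc.2 (hIccab ⟨le_refl a, le_of_lt hab⟩) (hIccab ⟨le_of_lt hab, le_refl b⟩)
      (ne_of_lt hab) hp hq hpq
    simp only [smul_eq_mul] at hcomb
    have harg : p * a + q * b = u := by rw [hpdef, hqdef]; field_simp; ring
    rw [harg] at hcomb
    have hlin : p * f₀ a + q * f₀ b = f₀ a + c₀ * (u - a) := by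
      rw [hpdef, hqdef, hc₀def]
      unfold waveSpeed
      field_simp
      ring
    rw [hlin] at hcomb
    rw [hGdef]
    simp only []
    linarith
  -- linear upper bounds near the end states, by concavity
  have hGb' : ∀ s ∈ Ioo a b, G s ≤ (c₀ - (f₀ ((b+1)/2) - f₀ b) / ((b+1)/2 - b)) * (b - s) := by
    intro s hs
    set σ := (f₀ ((b+1)/2) - f₀ b) / ((b+1)/2 - b) with hσdef
    have hzb : b < (b+1)/2 := by linarith
    have hslope := hconc.concaveOn.slope_anti_adjacent
      (hIccab ⟨le_of_lt hs.1, le_of_lt hs.2⟩)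
      (⟨by linarith, by linarith⟩ : (b+1)/2 ∈ Icc (0:ℝ) 1) hs.2 hzb
    have hσle : σ ≤ (f₀ b - f₀ s) / (b - s) := hslope
    have hmul : σ * (b - s) ≤ f₀ b - f₀ s := by
      rw [← sub_nonneg]
      have := (le_div_iff₀ (by linarith [hs.2] : (0:ℝ) < b - s)).1 hσle
      linarith
    rw [hGdef]
    simp only []
    linarith [hmul, hchord]
  have hGa' : ∀ s ∈ Ioo a b, G s ≤ ((f₀ a - f₀ (a/2)) / (a - a/2) - c₀) * (s - a) := by
    intro s hs
    set σ := (f₀ a - f₀ (a/2)) / (a - a/2) with hσdef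
    have hza : a/2 < a := by linarith
    have hslope := hconc.concaveOn.slope_anti_adjacent
      (⟨by linarith, by linarith⟩ : a/2 ∈ Icc (0:ℝ) 1)
      (hIccab ⟨le_of_lt hs.1, le_of_lt hs.2⟩) hza hs.1
    have hσle : (f₀ s - f₀ a) / (s - a) ≤ σ := hslope
    have hmul : f₀ s - f₀ a ≤ σ * (s - a) := by
      have := (div_le_iff₀ (by linarith [hs.1] : (0:ℝ) < s - a)).1 hσle
      linarith
    rw [hGdef]
    simp only []
    linarith [hmul]
  -- regularity of G and D₀ on (0,1)
  have hIooIcc : Ioo (0:ℝ) 1 ⊆ Icc 0 1 := Ioo_subset_Icc_self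
  have hGc : ContDiffOn ℝ 1 G (Ioo 0 1) := by
    rw [hGdef]
    exact ((hf₀.1.mono hIooIcc).sub contDiffOn_const).sub
      (contDiffOn_const.mul (contDiffOn_id.sub contDiffOn_const))
  have hDc : ContDiffOn ℝ 1 D₀ (Ioo 0 1) := hD₀.1.mono hIooIcc
  -- construct the common profile
  set M := K * |c₀| with hMdef
  have hM : 0 < M := mul_pos hKpos (abs_pos.2 hc₀ne)
  obtain ⟨η, hηcont, hηmono, hηmem, hηB, hηT, hη2, hηd⟩ :=
    exists_eta ha0 hab hb1 hM hGc hDc hD₀.2.2 hGpos hGa' hGb'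
  -- assemble the traveling wave
  have hCpos : ∀ h : Fin m ⊕ Fin n, 0 < v h * |c₀| :=
    fun h => mul_pos (hv h) (abs_pos.2 hc₀ne)
  have habs : |c₀| ≠ 0 := abs_ne_zero.2 hc₀ne
  refine ⟨fun _ => a, fun _ => b, fun h ξ => η (ξ / (v h * |c₀|)), ?_, ⟨?_, ?_⟩, ?_, ?_⟩
  · -- EndStates
    intro h
    exact ⟨by linarith, hab, by linarith⟩
  · -- profiles
    intro h
    have hspd' : spd f (fun _ => a) (fun _ => b) h = v h * c₀ := by
      rw [spd_eq f v f₀ hf]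
    have hws : waveSpeed (f h) a b = v h * c₀ := hspd'
    refine ⟨?_, ?_, ?_, ?_, ?_, ?_, ?_⟩
    · exact hηcont.comp (continuous_id.div_const _)
    · intro x y hxy
      apply hηmono
      have := hCpos h
      gcongr
    · exact fun ξ => Ioo_subset_Icc_self (hηmem _)
    · exact hηB.comp (tendsto_id.atBot_div_const (hCpos h))
    · exact hηT.comp (tendsto_id.atTop_div_const (hCpos h))
    · exact (hη2.comp ((contDiff_id).div_const _)).contDiffOn
    · intro ξ h1 h2
      set y := ξ / (v h * |c₀|) with hydef
      have hinner : HasDerivAt (fun ξ : ℝ => ξ / (v h * |c₀|)) (1 / (v h * |c₀|)) ξ := by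
        simpa using (hasDerivAt_id ξ).div_const (v h * |c₀|)
      have hdφ : HasDerivAt (fun ξ => η (ξ / (v h * |c₀|)))
          (M * G (η y) / D₀ (η y) / (v h * |c₀|)) ξ := by
        have := HasDerivAt.comp ξ (hηd y) hinner
        rw [show M * G (η y) / D₀ (η y) / (v h * |c₀|) = M * G (η y) / D₀ (η y) * (1 / (v h * |c₀|)) by ring]
        exact this
      have hderiv : deriv (fun ξ => η (ξ / (v h * |c₀|))) ξ
          = M * G (η y) / D₀ (η y) / (v h * |c₀|) := hdφ.deriv
      have hD₀y : 0 < D₀ (η y) := hD₀.2.2 _ ⟨by linarith [(hηmem y).1], by linarith [(hηmem y).2]⟩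
      have hGy : 0 < G (η y) := hGpos _ (hηmem y)
      constructor
      · rw [hderiv]
        have := hCpos h
        positivity
      · rw [hderiv, hD]
        show δ h * D₀ (η y) * _ = redFlux (f h) a b (η y) - redFlux (f h) a b a
        unfold redFlux
        rw [hws, hf, hf]
        have hv2 := hveq h
        have hGu : G (η y) = f₀ (η y) - f₀ a - c₀ * (η y - a) := by simp only [hGdef]
        rw [← mul_div_assoc, div_eq_iff (ne_of_gt (hCpos h)), ← mul_div_assoc,
          div_eq_iff (ne_of_gt hD₀y), hMdef]
        linear_combination (δ h * D₀ (η y) * K * |c₀|) * hGu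
          - (D₀ (η y) * |c₀| * (f₀ (η y) - c₀ * η y - f₀ a + c₀ * a)) * hv2
  · -- Tool
    intro t j'
    have hspd' : ∀ hh : Fin m ⊕ Fin n, spd f (fun _ => a) (fun _ => b) hh = v hh * c₀ :=
      fun hh => by rw [spd_eq f v f₀ hf]
    have harg : ∀ hh : Fin m ⊕ Fin n,
        spd f (fun _ => a) (fun _ => b) hh * t / (v hh * |c₀|) = c₀ * t / |c₀| := by
      intro hh
      rw [hspd' hh, div_eq_div_iff (ne_of_gt (hCpos hh)) habs]
      ring
    have hgred' : ∀ (hh : Fin m ⊕ Fin n) (ρ : ℝ),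
        gred f (fun _ => a) (fun _ => b) hh ρ = v hh * f₀ ρ - v hh * c₀ * ρ := by
      intro hh ρ
      have hws2 : waveSpeed (f hh) a b = v hh * c₀ := hspd' hh
      show f hh ρ - waveSpeed (f hh) a b * ρ = _
      rw [hf, hws2]
    show spd f (fun _ => a) (fun _ => b) (Sum.inr j') * η _ + _ = _
    rw [harg (Sum.inr j'), hgred', hspd' (Sum.inr j')]
    have hRHS : ∀ i' : Fin m, α i' j' *
        (spd f (fun _ => a) (fun _ => b) (Sum.inl i')
            * η (spd f (fun _ => a) (fun _ => b) (Sum.inl i') * t / (v (Sum.inl i') * |c₀|))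
          + gred f (fun _ => a) (fun _ => b) (Sum.inl i') a)
        = (α i' j' * v (Sum.inl i'))
          * (c₀ * η (c₀ * t / |c₀|) + f₀ a - c₀ * a) := by
      intro i'
      rw [harg (Sum.inl i'), hgred', hspd' (Sum.inl i')]
      ring
    calc v (Sum.inr j') * c₀ * η (c₀ * t / |c₀|) + (v (Sum.inr j') * f₀ a - v (Sum.inr j') * c₀ * a)
        = v (Sum.inr j') * (c₀ * η (c₀ * t / |c₀|) + f₀ a - c₀ * a) := by ring
      _ = (∑ i' : Fin m, α i' j' * v (Sum.inl i')) * (c₀ * η (c₀ * t / |c₀|) + f₀ a - c₀ * a) := by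
          rw [hsumv j']
      _ = _ := by
          rw [Finset.sum_mul]
          exact (Finset.sum_congr rfl fun i' _ => (hRHS i').symm)
  · -- nonzero speeds
    intro h
    rw [spd_eq f v f₀ hf]
    exact mul_ne_zero (hvne h) hc₀ne
  · -- continuity condition
    intro t i j
    have hspd' : ∀ hh : Fin m ⊕ Fin n, spd f (fun _ => a) (fun _ => b) hh = v hh * c₀ :=
      fun hh => by rw [spd_eq f v f₀ hf]
    have harg : ∀ hh : Fin m ⊕ Fin n,
        spd f (fun _ => a) (fun _ => b) hh * t / (v hh * |c₀|) = c₀ * t / |c₀| := by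
      intro hh
      rw [hspd' hh, div_eq_div_iff (ne_of_gt (hCpos hh)) habs]
      ring
    show η _ = η _
    rw [harg, harg]

end Helpers

/-- Proportional fluxes and diffusivities: existence of a completely non-stationary traveling
wave satisfying the continuity condition iff `(v_i/v_j)² = δ_i/δ_j` and
`∑_i α_{i,j} v_i/v_j = 1`. -/
theorem stmt16 (m n : ℕ) (hm : 0 < m) (hn : 0 < n)
    (f₀ D₀ : ℝ → ℝ) (hf₀ : FluxAssumption f₀) (hD₀ : DiffAssumption D₀)
    (v δ : Fin m ⊕ Fin n → ℝ) (hv : ∀ h, 0 < v h) (hδ : ∀ h, 0 < δ h)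
    (f D : Fin m ⊕ Fin n → ℝ → ℝ)
    (hf : ∀ h ℓ, f h ℓ = v h * f₀ ℓ) (hD : ∀ h ℓ, D h ℓ = δ h * D₀ ℓ)
    (α : Fin m → Fin n → ℝ)
    (hα : ∀ i j, α i j ∈ Ioc (0:ℝ) 1) (hα1 : ∀ i, ∑ j, α i j = 1) :
    (∃ (lm lp : Fin m ⊕ Fin n → ℝ) (φ : Fin m ⊕ Fin n → ℝ → ℝ),
        EndStates lm lp ∧ IsTravelingWave f D α lm lp φ ∧
        (∀ h, spd f lm lp h ≠ 0) ∧
        ∀ (t : ℝ) (i : Fin m) (j : Fin n),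
          φ (Sum.inr j) (spd f lm lp (Sum.inr j) * t)
            = φ (Sum.inl i) (spd f lm lp (Sum.inl i) * t)) ↔
    (∀ (i : Fin m) (j : Fin n),
        (v (Sum.inl i) / v (Sum.inr j)) ^ 2 = δ (Sum.inl i) / δ (Sum.inr j) ∧
        (∑ i' : Fin m, α i' j * (v (Sum.inl i') / v (Sum.inr j))) = 1) := by
  constructor
  · rintro ⟨lm, lp, φ, hE, ⟨hprof, htool⟩, hc, hcont⟩ i j
    exact fwd f₀ D₀ hf₀ hD₀ v δ hv hδ f D hf hD α lm lp φ hE hprof htool hc hcont i j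
  · intro hcond
    exact bwd hm hn f₀ D₀ hf₀ hD₀ v δ hv hδ f D hf hD α hα hα1 hcond
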